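/- Inductive step of the main construction: suppose x₀ < ⋯ < x_m < N_m and ξ_m : N_m ∖ {x₀,…,x_m} → 2 are such that T^{N_m}(ξ_m) is a binary tree and any two maximal elements s, t of W^{N_m}(ξ_m) with s ∼ t satisfy s ≡ t. Then there exist N_{m+1} > N_m and ξ_{m+1} : N_{m+1} ∖ {x₀,…,x_m, N_m} → 2 extending ξ_m such that T^{N_{m+1}}(ξ_{m+1}) is a binary tree and any two maximal elements s, t of W^{N_{m+1}}(ξ_{m+1}) with s ∼ t satisfy s ≡ t. -/

import Mathlib

/-- `P` is the map `Ψ*` defined by recursion from `Ψ`: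
`Ψ*(⟨⟩) = ⟨⟩` and `Ψ*(t⌢⟨i⟩) = Ψ*(t)⌢⟨Ψ(t⌢⟨i⟩)⟩`. -/
def IsPsiStar (Ψ : List Bool → ℕ) (P : List Bool → List ℕ) : Prop :=
  P [] = [] ∧ ∀ (t : List Bool) (i : Bool), P (t ++ [i]) = P t ++ [Ψ (t ++ [i])]

/-- `s ≡ t` : `Ψ(s⌢θ) = Ψ(t⌢θ)` for all finite binary sequences `θ`. -/
def Eqv (Ψ : List Bool → ℕ) (s t : List Bool) : Prop :=
  ∀ θ : List Bool, Ψ (s ++ θ) = Ψ (t ++ θ)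

/-- `t` is compatible with the partial function `ξ : ω ⇀ 2`. -/
def Compat (ξ : ℕ → Option Bool) (t : List Bool) : Prop :=
  ∀ k < t.length, ∀ b, ξ k = some b → t[k]? = some b

/-- `W^ℓ(ξ)` for finite `ℓ`: compatible sequences of length `≤ ℓ`. -/
def Wfin (ξ : ℕ → Option Bool) (ℓ : ℕ) : Set (List Bool) :=
  {t | t.length ≤ ℓ ∧ Compat ξ t}

/-- `W(ξ) = W^ω(ξ)`: all sequences compatible with `ξ`. -/
def Wall (ξ : ℕ → Option Bool) : Set (List Bool) :=
  {t | Compat ξ t}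

/-- the set of minimal proper extensions of `η` in `T`. -/
def succT (T : Set (List ℕ)) (η : List ℕ) : Set (List ℕ) :=
  {ν | ν ∈ T ∧ η <+: ν ∧ η ≠ ν ∧ ∀ ρ ∈ T, η <+: ρ → ρ <+: ν → ρ = η ∨ ρ = ν}

/-- a tree is binary if every node has at most 2 immediate successors. -/
def IsBinary (T : Set (List ℕ)) : Prop :=
  ∀ η ∈ T, (succT T η).Finite ∧ (succT T η).ncard ≤ 2

section Aux
variable {Ψ : List Bool → ℕ} {P : List Bool → List ℕ}

lemma len_P (hP : IsPsiStar Ψ P) : ∀ u, (P u).length = u.length := by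
  intro u
  induction u using List.reverseRecOn with
  | nil => simp [hP.1]
  | append_singleton l a ih => simp [hP.2, ih]

lemma prefix_P (hP : IsPsiStar Ψ P) (u w : List Bool) : P u <+: P (u ++ w) := by
  induction w using List.reverseRecOn with
  | nil => simp
  | append_singleton w a ih =>
      rw [← List.append_assoc, hP.2]
      exact ih.trans (List.prefix_append _ _)

lemma take_P (hP : IsPsiStar Ψ P) (u : List Bool) (k : ℕ) :
    P (u.take k) = (P u).take k := by
  have h1 : P (u.take k) <+: P u := by
    have := prefix_P hP (u.take k) (u.drop k)
    rwa [List.take_append_drop] at this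
  rw [List.prefix_iff_eq_take.mp h1, len_P hP, List.length_take]
  rw [List.take_eq_take_iff, len_P hP]
  omega

lemma getLast?_P (hP : IsPsiStar Ψ P) {w : List Bool} (hw : w ≠ []) :
    (P w).getLast? = some (Ψ w) := by
  obtain ⟨l, a, rfl⟩ := (List.eq_nil_or_concat w).resolve_left hw
  rw [List.concat_eq_append, hP.2]
  exact List.getLast?_concat

lemma compat_prefix {ξ : ℕ → Option Bool} {u v : List Bool}
    (h : Compat ξ v) (hp : u <+: v) : Compat ξ u := by
  intro k hk b hb
  obtain ⟨w, rfl⟩ := hp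
  have h2 := h k (by rw [List.length_append]; omega) b hb
  rwa [List.getElem?_append, if_pos hk] at h2

def GoodExt (Ψ : List Bool → ℕ) (θ s t : List Bool) : Prop :=
  Eqv Ψ (s ++ θ) (t ++ θ) ∨ ∃ χ, χ <+: θ ∧ Ψ (s ++ χ) ≠ Ψ (t ++ χ)

lemma good_mono {θ ρ s t : List Bool} (h : GoodExt Ψ θ s t) : GoodExt Ψ (θ ++ ρ) s t := by
  rcases h with h | ⟨χ, hχ, hne⟩
  · exact Or.inl (fun δ => by simpa [List.append_assoc] using h (ρ ++ δ))
  · exact Or.inr ⟨χ, hχ.trans (List.prefix_append _ _), hne⟩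

lemma good_step (Ψ : List Bool → ℕ) (θ s t : List Bool) : ∃ ρ, GoodExt Ψ (θ ++ ρ) s t := by
  by_cases h : Eqv Ψ (s ++ θ) (t ++ θ)
  · exact ⟨[], by rw [List.append_nil]; exact Or.inl h⟩
  · simp only [Eqv, not_forall] at h
    obtain ⟨δ, hδ⟩ := h
    exact ⟨δ, Or.inr ⟨θ ++ δ, List.prefix_rfl, by
      simpa [List.append_assoc] using hδ⟩⟩

lemma exists_good (Ψ : List Bool → ℕ) (F : Set (List Bool × List Bool)) (hF : F.Finite) :
    ∃ θ, ∀ p ∈ F, GoodExt Ψ θ p.1 p.2 := by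
  refine Set.Finite.induction_on (motive := fun S _ => ∃ θ, ∀ p ∈ S, GoodExt Ψ θ p.1 p.2) F hF
    ⟨[], by simp⟩ ?_
  rintro a s _ _ ⟨θ, hθ⟩
  obtain ⟨ρ, hρ⟩ := good_step Ψ θ a.1 a.2
  refine ⟨θ ++ ρ, ?_⟩
  rintro p (rfl | hp)
  · exact hρ
  · exact good_mono (hθ p hp)

end Aux

theorem inductive_step (Ψ : List Bool → ℕ) (P : List Bool → List ℕ)
    (hP : IsPsiStar Ψ P) (m Nm : ℕ) (x : Fin (m + 1) → ℕ)
    (hx : StrictMono x) (hxN : x (Fin.last m) < Nm)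
    (ξm : ℕ → Option Bool)
    (hdom : ∀ k, ξm k ≠ none ↔ k < Nm ∧ k ∉ Set.range x)
    (hbin : IsBinary (P '' Wfin ξm Nm))
    (hmax : ∀ s t : List Bool, s.length = Nm → t.length = Nm →
      Compat ξm s → Compat ξm t → P s = P t → Eqv Ψ s t) :
    ∃ N' > Nm, ∃ ξ' : ℕ → Option Bool,
      (∀ k b, ξm k = some b → ξ' k = some b) ∧
      (∀ k, ξ' k ≠ none ↔ k < N' ∧ k ∉ Set.range x ∧ k ≠ Nm) ∧
      IsBinary (P '' Wfin ξ' N') ∧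
      (∀ s t : List Bool, s.length = N' → t.length = N' →
        Compat ξ' s → Compat ξ' t → P s = P t → Eqv Ψ s t) := by
  classical
  have hnone : ∀ k, Nm ≤ k → ξm k = none := by
    intro k hk
    by_contra h
    have := ((hdom k).mp h).1
    omega
  have hxlt : ∀ i, x i < Nm := fun i => lt_of_le_of_lt (hx.monotone (Fin.le_last i)) hxN
  -- the separating sequence θ
  obtain ⟨θ, hθ⟩ := exists_good Ψ
    ({l : List Bool | l.length = Nm + 1} ×ˢ {l : List Bool | l.length = Nm + 1})
    ((List.finite_length_eq _ _).prod (List.finite_length_eq _ _))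
  have hGood : ∀ s t : List Bool, s.length = Nm + 1 → t.length = Nm + 1 →
      GoodExt Ψ θ s t := by
    intro s t hs ht
    exact hθ (s, t) (Set.mk_mem_prod hs ht)
  set N' := Nm + 1 + θ.length with hN'
  set ξ' : ℕ → Option Bool := fun k => if k ≤ Nm then ξm k else θ[k - (Nm + 1)]? with hξ'
  have hξ'lo : ∀ k, k ≤ Nm → ξ' k = ξm k := by intro k hk; simp [hξ', hk]
  have hξ'hi : ∀ k, Nm < k → ξ' k = θ[k - (Nm + 1)]? := by
    intro k hk; simp [hξ', Nat.not_le.mpr hk]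
  -- compatibility transfer
  have hc1 : ∀ {u : List Bool}, Compat ξ' u → Compat ξm u := by
    intro u h k hk b hb
    have hkN : k < Nm := by
      by_contra hh
      rw [hnone k (by omega)] at hb
      cases hb
    exact h k hk b (by rw [hξ'lo k (by omega)]; exact hb)
  have hc2 : ∀ {u : List Bool}, u.length ≤ Nm → Compat ξm u → Compat ξ' u := by
    intro u hu h k hk b hb
    rw [hξ'lo k (by omega)] at hb
    exact h k hk b hb
  have hforced : ∀ {u : List Bool}, Compat ξ' u → u.length ≤ N' →
      u.drop (Nm + 1) = θ.take (u.length - (Nm + 1)) := by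
    intro u hu hlen
    apply List.ext_getElem?
    intro j
    rw [List.getElem?_drop, List.getElem?_take]
    by_cases h : j < u.length - (Nm + 1)
    · rw [if_pos h]
      have hjθ : j < θ.length := by omega
      have hb : ξ' (Nm + 1 + j) = some θ[j] := by
        rw [hξ'hi _ (by omega)]
        have : Nm + 1 + j - (Nm + 1) = j := by omega
        rw [this, List.getElem?_eq_getElem hjθ]
      rw [hu (Nm + 1 + j) (by omega) _ hb, List.getElem?_eq_getElem hjθ]
    · rw [if_neg h, List.getElem?_eq_none (by omega)]
  have hdec : ∀ {u : List Bool}, Compat ξ' u → u.length = N' →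
      u = u.take (Nm + 1) ++ θ := by
    intro u hu hlen
    conv_lhs => rw [← List.take_append_drop (Nm + 1) u]
    rw [hforced hu hlen.le, hlen]
    have : N' - (Nm + 1) = θ.length := by omega
    rw [this, List.take_length]
  -- characterization of successors
  have hchar : ∀ η ν : List ℕ, ν ∈ succT (P '' Wfin ξ' N') η →
      ∃ w : List Bool, Compat ξ' w ∧ w.length = η.length + 1 ∧ w.length ≤ N' ∧
        P w = ν ∧ η = (P w).take η.length := by
    intro η ν hν
    obtain ⟨hνT, hpre, hne, hmin⟩ := hν
    obtain ⟨u, ⟨hulen, hucomp⟩, hPu⟩ := hνT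
    have hlt : η.length < ν.length :=
      lt_of_le_of_ne hpre.length_le (fun h => hne (hpre.eq_of_length h))
    have hul : u.length = ν.length := by rw [← hPu, len_P hP]
    set w := u.take (η.length + 1) with hw
    have hwlen : w.length = η.length + 1 := by
      rw [hw, List.length_take]; omega
    have hwc : Compat ξ' w := compat_prefix hucomp (List.take_prefix _ _)
    have hwle : w.length ≤ N' := by rw [hwlen]; omega
    have hPw : P w = ν.take (η.length + 1) := by
      rw [hw, take_P hP, hPu]
    have hηtake : η = (P w).take η.length := by
      rw [hPw, List.take_take]
      have : η.length ⊓ (η.length + 1) = η.length := by omega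
      rw [this]
      exact List.prefix_iff_eq_take.mp hpre
    have hηpre : η <+: P w := hηtake ▸ List.take_prefix _ _
    have hPwpre : P w <+: ν := hPw ▸ List.take_prefix _ _
    have hwmem : P w ∈ P '' Wfin ξ' N' := ⟨w, ⟨hwle, hwc⟩, rfl⟩
    rcases hmin (P w) hwmem hηpre hPwpre with h | h
    · exfalso
      have := len_P hP w
      rw [h] at this
      omega
    · exact ⟨w, hwc, hwlen, hwle, h, by rw [h]; exact hηtake.trans (by rw [h])⟩
  
  refine ⟨N', by omega, ξ', ?_, ?_, ?_, ?_⟩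
  · -- extension
    intro k b hb
    have hk : k < Nm := by
      by_contra h
      rw [hnone k (by omega)] at hb
      cases hb
    rw [hξ'lo k (by omega)]
    exact hb
  · -- domain
    intro k
    rcases le_or_gt k Nm with hk | hk
    · rw [hξ'lo k hk, hdom k]
      constructor
      · rintro ⟨h1, h2⟩
        exact ⟨by omega, h2, by omega⟩
      · rintro ⟨h1, h2, h3⟩
        exact ⟨by omega, h2⟩
    · rw [hξ'hi k hk]
      constructor
      · intro h
        have hj : k - (Nm + 1) < θ.length := by
          by_contra hh
          exact h (List.getElem?_eq_none (by omega))
        refine ⟨by omega, ?_, by omega⟩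
        rintro ⟨i, rfl⟩
        exact absurd (hxlt i) (by omega)
      · rintro ⟨h1, h2, h3⟩
        rw [List.getElem?_eq_getElem (by omega)]
        exact Option.some_ne_none _
  · -- binary
    intro η hη
    obtain ⟨u, ⟨hulen, hucomp⟩, hPu⟩ := hη
    have hηlen : η.length = u.length := by rw [← hPu, len_P hP]
    by_cases hsmall : η.length < Nm
    · -- low nodes: successors are successors in the old tree
      have hηT : η ∈ P '' Wfin ξm Nm := ⟨u, ⟨by omega, hc1 hucomp⟩, hPu⟩
      have hTsub : P '' Wfin ξm Nm ⊆ P '' Wfin ξ' N' := by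
        rintro _ ⟨v, ⟨hv1, hv2⟩, rfl⟩
        exact ⟨v, ⟨by omega, hc2 hv1 hv2⟩, rfl⟩
      have hsub : succT (P '' Wfin ξ' N') η ⊆ succT (P '' Wfin ξm Nm) η := by
        intro ν hν
        obtain ⟨w, hwc, hwlen, hwle, hPwv, _⟩ := hchar η ν hν
        obtain ⟨_, hpre, hne, hmin⟩ := hν
        refine ⟨⟨w, ⟨by omega, hc1 hwc⟩, hPwv⟩, hpre, hne,
          fun ρ hρ h1 h2 => hmin ρ (hTsub hρ) h1 h2⟩
      obtain ⟨hf, hn⟩ := hbin η hηT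
      exact ⟨hf.subset hsub, le_trans (Set.ncard_le_ncard hsub hf) hn⟩
    · push_neg at hsmall
      by_cases hbig : N' ≤ η.length
      · -- top nodes: no successors
        have hempty : succT (P '' Wfin ξ' N') η = ∅ := by
          ext ν
          simp only [Set.mem_empty_iff_false, iff_false]
          intro hν
          obtain ⟨w, hwc, hwlen, hwle, _, _⟩ := hchar η ν hν
          omega
        rw [hempty]
        simp
      · -- middle nodes
        push_neg at hbig
        rcases Set.eq_empty_or_nonempty (succT (P '' Wfin ξ' N') η) with hemp | ⟨ν₀, hν₀⟩
        · rw [hemp]; simp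
        obtain ⟨w₀, hw₀c, hw₀len, hw₀le, hPw₀, hηtake₀⟩ := hchar η ν₀ hν₀
        set v : Bool → ℕ := fun c => Ψ (w₀.take Nm ++ (c :: θ.take (η.length - Nm))) with hv
        have hsub : succT (P '' Wfin ξ' N') η ⊆ {η ++ [v false], η ++ [v true]} := by
          intro ν hν
          obtain ⟨w, hwc, hwlen, hwle, hPw, hηtake⟩ := hchar η ν hν
          have hNmw : Nm < w.length := by omega
          have htkP : P (w.take Nm) = P (w₀.take Nm) := by
            rw [take_P hP, take_P hP]
            have h1 : (P w).take Nm = ((P w).take η.length).take Nm := by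
              rw [List.take_take]; congr 1; omega
            have h2 : (P w₀).take Nm = ((P w₀).take η.length).take Nm := by
              rw [List.take_take]; congr 1; omega
            rw [h1, h2, ← hηtake, ← hηtake₀]
          have heqv : Eqv Ψ (w.take Nm) (w₀.take Nm) :=
            hmax _ _ (by rw [List.length_take]; omega) (by rw [List.length_take]; omega)
              (hc1 (compat_prefix hwc (List.take_prefix _ _)))
              (hc1 (compat_prefix hw₀c (List.take_prefix _ _))) htkP
          have hdropw : w.drop (Nm + 1) = θ.take (η.length - Nm) := by
            rw [hforced hwc hwle]
            congr 1
            omega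
          have hwdecomp : w = w.take Nm ++ (w[Nm] :: θ.take (η.length - Nm)) := by
            conv_lhs => rw [← List.take_append_drop Nm w]
            rw [List.drop_eq_getElem_cons hNmw, hdropw]
          have hΨw : Ψ w = v w[Nm] := by
            rw [hv]
            conv_lhs => rw [hwdecomp]
            exact heqv _
          have hlast : w = w.take η.length ++ [w[η.length]'(by omega)] := by
            conv_lhs => rw [← List.take_append_drop η.length w]
            rw [List.drop_eq_getElem_cons (by omega)]
            congr 1
            rw [List.drop_eq_nil_of_le (by omega)]
          have hν_eq : ν = η ++ [Ψ w] := by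
            rw [← hPw]
            conv_lhs => rw [hlast]
            rw [hP.2, ← hlast]
            congr 1
            rw [take_P hP]
            exact hηtake.symm
          rw [hν_eq, hΨw]
          cases w[Nm]
          · exact Or.inl rfl
          · exact Or.inr rfl
        have hpf : ({η ++ [v false], η ++ [v true]} : Set (List ℕ)).Finite :=
          (Set.finite_singleton _).insert _
        refine ⟨hpf.subset hsub, le_trans (Set.ncard_le_ncard hsub hpf) ?_⟩
        exact le_trans (Set.ncard_insert_le _ _) (by simp)
  · -- the equivalence property at level N'
    intro s t hs ht hcs hct hPst
    have hsd := hdec hcs hs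
    have htd := hdec hct ht
    have hls : (s.take (Nm + 1)).length = Nm + 1 := by rw [List.length_take]; omega
    have hlt : (t.take (Nm + 1)).length = Nm + 1 := by rw [List.length_take]; omega
    rcases hGood (s.take (Nm + 1)) (t.take (Nm + 1)) hls hlt with heqv | ⟨χ, hχ, hne⟩
    · intro δ
      have h := heqv δ
      rw [← hsd, ← htd] at h
      exact h
    · exfalso
      have hχtake : χ = θ.take χ.length := List.prefix_iff_eq_take.mp hχ
      have e1 : s.take (Nm + 1 + χ.length) = s.take (Nm + 1) ++ χ := by
        conv_lhs => rw [hsd]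
        have h := List.take_length_add_append (l₁ := s.take (Nm + 1)) (l₂ := θ) χ.length
        rw [hls] at h
        rw [h, ← hχtake]
      have e2 : t.take (Nm + 1 + χ.length) = t.take (Nm + 1) ++ χ := by
        conv_lhs => rw [htd]
        have h := List.take_length_add_append (l₁ := t.take (Nm + 1)) (l₂ := θ) χ.length
        rw [hlt] at h
        rw [h, ← hχtake]
      have ePs : P (s.take (Nm + 1) ++ χ) = P (t.take (Nm + 1) ++ χ) := by
        rw [← e1, ← e2, take_P hP, take_P hP, hPst]
      have h1 := getLast?_P hP (w := s.take (Nm + 1) ++ χ) (by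
        intro h
        apply_fun List.length at h
        rw [List.length_append, hls] at h
        simp at h)
      have h2 := getLast?_P hP (w := t.take (Nm + 1) ++ χ) (by
        intro h
        apply_fun List.length at h
        rw [List.length_append, hlt] at h
        simp at h)
      rw [ePs, h2] at h1
      exact hne (Option.some.inj h1).symm
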